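/- For the l=1 stochastic S-matrix weights given by formula (25), the column sums equal 1: for fixed input (ε_j, β) with β_0 + ... + β_n = m, the sum over outputs k of the weight S(z)_{ε_j,β}^{ε_k,δ} (with δ = ε_j + β - ε_k) equals 1. Concretely, for k = j the weight is q^{2β_{[j,n]}-m+1}(1 - q^{-2β_j+m-1}z)/(q^{m+1}-z); for k < j with β_k ≥ 1 it is -q^{2β_{[k+1,n]}-m+1}(1-q^{2β_k})/(q^{m+1}-z); for k > j with β_k ≥ 1 it is -q^{2β_{[k+1,n]}}z(1-q^{2β_k})/(q^{m+1}-z); and these sum to 1. -/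

import Mathlib

open Finset

/-- For the `l = 1` stochastic `S`-matrix weights given by formula (25), the
column sums equal `1`: for fixed input `(ε_j, β)` with `β_0 + ⋯ + β_n = m`, the
sum over outputs `k` of the weight `S(z)_{ε_j,β}^{ε_k,δ}` equals `1`. -/
theorem l_eq_one_S_matrix_column_sum (n m : ℕ) (hn : 1 ≤ n) (hm : 1 ≤ m)
    (β : Fin (n + 1) → ℕ) (hβ : ∑ i, β i = m) (j : Fin (n + 1))
    (q z : ℂ) (hq : q ≠ 0) (h : q ^ (m + 1) ≠ z) :
    (∑ k : Fin (n + 1),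
      if k = j then
        q ^ (2 * (∑ i ∈ Finset.Ici j, (β i : ℤ)) - m + 1) *
          (1 - q ^ (-(2 * (β j : ℤ)) + m - 1) * z) / (q ^ (m + 1) - z)
      else if k < j then
        -q ^ (2 * (∑ i ∈ Finset.Ioi k, (β i : ℤ)) - m + 1) *
          (1 - q ^ (2 * (β k : ℤ))) / (q ^ (m + 1) - z)
      else
        -q ^ (2 * (∑ i ∈ Finset.Ioi k, (β i : ℤ))) * z *
          (1 - q ^ (2 * (β k : ℤ))) / (q ^ (m + 1) - z)) = 1 := by
  have hD : q ^ (m + 1) - z ≠ 0 := sub_ne_zero.mpr h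
  -- partial sums S k = ∑_{i ≥ k} β i, as a function of a natural index
  set S : ℕ → ℤ := fun k =>
    ∑ i ∈ (Finset.univ : Finset (Fin (n + 1))).filter (fun i => k ≤ i.val),
      (β i : ℤ) with hSdef
  have hS0 : S 0 = m := by
    simp only [hSdef]
    have huniv : (Finset.univ : Finset (Fin (n + 1))).filter (fun i => 0 ≤ i.val) =
        Finset.univ := by simp
    rw [huniv, ← Nat.cast_sum, hβ]
  have hStop : S (n + 1) = 0 := by
    simp only [hSdef]
    rw [Finset.filter_false_of_mem, Finset.sum_empty]
    intro i _
    exact Nat.not_le.mpr i.isLt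
  have hIci : ∑ i ∈ Finset.Ici j, (β i : ℤ) = S j.val := by
    apply Finset.sum_congr _ (fun _ _ => rfl)
    ext i
    simp only [Finset.mem_Ici, Finset.mem_filter, Finset.mem_univ, true_and, Fin.le_def]
  have hIoi : ∀ k : Fin (n + 1), ∑ i ∈ Finset.Ioi k, (β i : ℤ) = S (k.val + 1) := by
    intro k
    apply Finset.sum_congr _ (fun _ _ => rfl)
    ext i
    simp only [Finset.mem_Ioi, Finset.mem_filter, Finset.mem_univ, true_and, Fin.lt_def]
    omega
  have hstep : ∀ k : Fin (n + 1), S k.val = (β k : ℤ) + S (k.val + 1) := by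
    intro k
    simp only [hSdef]
    have : (Finset.univ : Finset (Fin (n + 1))).filter (fun i => k.val ≤ i.val) =
        insert k ((Finset.univ : Finset (Fin (n + 1))).filter (fun i => k.val + 1 ≤ i.val)) := by
      ext i
      simp only [Finset.mem_insert, Finset.mem_filter, Finset.mem_univ, true_and]
      constructor
      · intro hi
        rcases eq_or_lt_of_le hi with h1 | h1
        · left; exact Fin.ext h1.symm
        · right; exact h1
      · rintro (rfl | hi)
        · exact le_refl _
        · omega
    rw [this, Finset.sum_insert (by simp)]
  have hz : ∀ a b : ℤ, q ^ a * q ^ b = q ^ (a + b) := fun a b => (zpow_add₀ hq a b).symm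
  -- telescoping function
  set F : ℕ → ℂ := fun k => if k ≤ j.val then q ^ (2 * S k - m + 1) else z * q ^ (2 * S k)
    with hFdef
  have key : ∀ k : Fin (n + 1),
      (if k = j then
        q ^ (2 * (∑ i ∈ Finset.Ici j, (β i : ℤ)) - m + 1) *
          (1 - q ^ (-(2 * (β j : ℤ)) + m - 1) * z) / (q ^ (m + 1) - z)
      else if k < j then
        -q ^ (2 * (∑ i ∈ Finset.Ioi k, (β i : ℤ)) - m + 1) *
          (1 - q ^ (2 * (β k : ℤ))) / (q ^ (m + 1) - z)
      else
        -q ^ (2 * (∑ i ∈ Finset.Ioi k, (β i : ℤ))) * z *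
          (1 - q ^ (2 * (β k : ℤ))) / (q ^ (m + 1) - z))
      = (F k.val - F (k.val + 1)) / (q ^ (m + 1) - z) := by
    intro k
    by_cases hkj : k = j
    · subst hkj
      rw [if_pos rfl, hIci]
      congr 1
      have h2 : ¬ (k.val + 1 ≤ k.val) := by omega
      simp only [hFdef, if_pos (le_refl k.val), if_neg h2]
      rw [mul_sub, mul_one, ← mul_assoc, hz,
        show (2 * S k.val - m + 1) + (-(2 * (β k : ℤ)) + m - 1) = 2 * S (k.val + 1) by
          rw [hstep k]; ring]
      ring
    · by_cases hlt : k < j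
      · rw [if_neg hkj, if_pos hlt, hIoi]
        congr 1
        have h1 : k.val ≤ j.val := le_of_lt hlt
        have h2 : k.val + 1 ≤ j.val := hlt
        simp only [hFdef, if_pos h1, if_pos h2]
        rw [neg_mul, mul_sub, mul_one, hz,
          show (2 * S (k.val + 1) - m + 1) + 2 * (β k : ℤ) = 2 * S k.val - m + 1 by
            rw [hstep k]; ring]
        ring
      · rw [if_neg hkj, if_neg hlt, hIoi]
        congr 1
        have hgt : j < k := lt_of_le_of_ne (not_lt.mp hlt) (Ne.symm hkj)
        have h1 : ¬ (k.val ≤ j.val) := by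
          intro hc
          exact hkj (le_antisymm (Fin.le_def.mpr hc) (le_of_lt hgt))
        have h2 : ¬ (k.val + 1 ≤ j.val) := by
          intro hc; exact h1 (by omega)
        simp only [hFdef, if_neg h1, if_neg h2]
        rw [neg_mul, neg_mul, mul_sub, mul_one, mul_comm (q ^ (2 * S (k.val + 1))) z,
          mul_assoc, hz,
          show (2 * S (k.val + 1)) + 2 * (β k : ℤ) = 2 * S k.val by rw [hstep k]; ring]
        ring
  rw [Finset.sum_congr rfl (fun k _ => key k), ← Finset.sum_div]
  rw [Fin.sum_univ_eq_sum_range (fun i => F i - F (i + 1)) (n + 1)]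
  rw [Finset.sum_range_sub' F (n + 1)]
  have hF0 : F 0 = q ^ (m + 1) := by
    simp only [hFdef, if_pos (Nat.zero_le j.val), hS0]
    rw [show (2 * (m : ℤ) - m + 1) = ((m + 1 : ℕ) : ℤ) by push_cast; ring, zpow_natCast]
  have hFtop : F (n + 1) = z := by
    have : ¬ (n + 1 ≤ j.val) := Nat.not_le.mpr j.isLt
    simp [hFdef, this, hStop]
  rw [hF0, hFtop, div_self hD]
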